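/- For every ε > 0 there exists δ > 0 such that for every h with 0 < h < δ and every u solving BVP(h), one has |u(y) − c_*| + |u'(y)| + |u''(y)| < ε for all y ∈ [0,1]; i.e., u[h] → c_* in C²([0,1]) as h → 0. -/

import Mathlib

open Set MeasureTheory intervalIntegral Filter
open Topology

/-- `u` (with derivative `u'` and second derivative `u''`) solves the boundary value
problem BVP(h): `(κ/h²)·u'' = r(u)` on `[0,1]`, `u'(0) = 0`,
`u(1) + (L·κ/(κ_L·h))·u'(1) = c_*`. -/
def SolvesBVP (κ κL L cstar : ℝ) (r : ℝ → ℝ) (h : ℝ)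
    (u u' u'' : ℝ → ℝ) : Prop :=
  (∀ y ∈ Icc (0:ℝ) 1, HasDerivWithinAt u (u' y) (Icc (0:ℝ) 1) y) ∧
  (∀ y ∈ Icc (0:ℝ) 1, HasDerivWithinAt u' (u'' y) (Icc (0:ℝ) 1) y) ∧
  ContinuousOn u'' (Icc (0:ℝ) 1) ∧
  (∀ y ∈ Icc (0:ℝ) 1, (κ / h ^ 2) * u'' y = r (u y)) ∧
  u' 0 = 0 ∧
  u 1 + (L * κ / (κL * h)) * u' 1 = cstar

lemma BVPaux_cont {f f' : ℝ → ℝ} {a b : ℝ}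
    (hf : ∀ y ∈ Icc a b, HasDerivWithinAt f (f' y) (Icc a b) y) :
    ContinuousOn f (Icc a b) := fun y hy => (hf y hy).continuousWithinAt

lemma BVPaux_mono {f f' : ℝ → ℝ} {a b : ℝ}
    (hf : ∀ y ∈ Icc a b, HasDerivWithinAt f (f' y) (Icc a b) y)
    (h0 : ∀ y ∈ Icc a b, 0 ≤ f' y) : MonotoneOn f (Icc a b) := by
  have hd : ∀ x ∈ Ioo a b, HasDerivAt f (f' x) x := fun x hx =>
    (hf x (Ioo_subset_Icc_self hx)).hasDerivAt (Icc_mem_nhds hx.1 hx.2)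
  apply monotoneOn_of_deriv_nonneg (convex_Icc a b) (BVPaux_cont hf)
  · intro x hx
    rw [interior_Icc] at hx
    exact (hd x hx).differentiableAt.differentiableWithinAt
  · intro x hx
    rw [interior_Icc] at hx
    rw [(hd x hx).deriv]
    exact h0 x (Ioo_subset_Icc_self hx)

lemma BVPaux_pos_invariant {c : ℝ} (hc : 0 < c) {r : ℝ → ℝ}
    (hr0 : r 0 = 0) (hrpos : ∀ s : ℝ, 0 < s → 0 < r s)
    {u u' u'' : ℝ → ℝ}
    (hu : ∀ y ∈ Icc (0:ℝ) 1, HasDerivWithinAt u (u' y) (Icc (0:ℝ) 1) y)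
    (hu' : ∀ y ∈ Icc (0:ℝ) 1, HasDerivWithinAt u' (u'' y) (Icc (0:ℝ) 1) y)
    (heq : ∀ y ∈ Icc (0:ℝ) 1, u'' y = c * r (u y))
    (h00 : 0 < u 0) (h01 : u' 0 = 0) :
    ∀ y ∈ Icc (0:ℝ) 1, u 0 ≤ u y ∧ 0 ≤ u' y := by
  -- helper: if u ≥ 0 on [0,T] then u ≥ u 0 and u' ≥ 0 on [0,T]
  have key : ∀ T ∈ Icc (0:ℝ) 1, (∀ z ∈ Icc (0:ℝ) T, 0 ≤ u z) →
      ∀ z ∈ Icc (0:ℝ) T, u 0 ≤ u z ∧ 0 ≤ u' z := by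
    intro T hT hpos
    have hsub : Icc (0:ℝ) T ⊆ Icc (0:ℝ) 1 := Icc_subset_Icc le_rfl hT.2
    have h2 : ∀ z ∈ Icc (0:ℝ) T, 0 ≤ u'' z := by
      intro z hz
      rw [heq z (hsub hz)]
      rcases (hpos z hz).eq_or_lt with h | h
      · rw [← h, hr0, mul_zero]
      · exact le_of_lt (mul_pos hc (hrpos _ h))
    have h0mem : (0:ℝ) ∈ Icc (0:ℝ) T := ⟨le_rfl, hT.1⟩
    have hm' : MonotoneOn u' (Icc 0 T) :=
      BVPaux_mono (fun y hy => (hu' y (hsub hy)).mono hsub) h2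
    have h1 : ∀ z ∈ Icc (0:ℝ) T, 0 ≤ u' z := by
      intro z hz
      have := hm' h0mem hz hz.1
      rwa [h01] at this
    have hm : MonotoneOn u (Icc 0 T) :=
      BVPaux_mono (fun y hy => (hu y (hsub hy)).mono hsub) h1
    exact fun z hz => ⟨hm h0mem hz hz.1, h1 z hz⟩
  -- positivity on [0,1] via sSup argument
  set S : Set ℝ := {y | y ∈ Icc (0:ℝ) 1 ∧ ∀ z ∈ Icc (0:ℝ) y, 0 < u z} with hSdef
  have hS0 : (0:ℝ) ∈ S := by
    refine ⟨⟨le_rfl, zero_le_one⟩, fun z hz => ?_⟩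
    have : z = 0 := le_antisymm hz.2 hz.1
    rwa [this]
  have hbdd : BddAbove S := ⟨1, fun y hy => hy.1.2⟩
  set T := sSup S with hTdef
  have hT0 : 0 ≤ T := le_csSup hbdd hS0
  have hT1 : T ≤ 1 := csSup_le ⟨0, hS0⟩ fun y hy => hy.1.2
  have hTmem : T ∈ Icc (0:ℝ) 1 := ⟨hT0, hT1⟩
  have hlt : ∀ z, 0 ≤ z → z < T → 0 < u z := by
    intro z hz0 hzT
    obtain ⟨y, hyS, hzy⟩ := exists_lt_of_lt_csSup ⟨0, hS0⟩ hzT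
    exact hyS.2 z ⟨hz0, le_of_lt hzy⟩
  have huT : 0 < u T := by
    rcases eq_or_lt_of_le hT0 with h | h
    · rwa [← h]
    · -- T > 0 : first u T ≥ 0 by limit from the left
      have hTge : 0 ≤ u T := by
        have hcw : ContinuousWithinAt u (Ico 0 T) T :=
          ((hu T hTmem).continuousWithinAt).mono (fun x hx => ⟨hx.1, hx.2.le.trans hT1⟩)
        have hne : (𝓝[Ico (0:ℝ) T] T).NeBot := by
          rw [← mem_closure_iff_nhdsWithin_neBot, closure_Ico h.ne]
          exact ⟨hT0, le_rfl⟩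
        refine ge_of_tendsto hcw ?_
        filter_upwards [self_mem_nhdsWithin] with z hz
        exact (hlt z hz.1 hz.2).le
      have hge : ∀ z ∈ Icc (0:ℝ) T, 0 ≤ u z := by
        intro z hz
        rcases eq_or_lt_of_le hz.2 with h' | h'
        · rwa [h']
        · exact (hlt z hz.1 h').le
      have := (key T hTmem hge T ⟨hT0, le_rfl⟩).1
      linarith
  have hTS : T ∈ S := by
    refine ⟨hTmem, fun z hz => ?_⟩
    rcases eq_or_lt_of_le hz.2 with h' | h'
    · rwa [h']
    · exact hlt z hz.1 h'
  have hTeq : T = 1 := by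
    by_contra hne
    have hTlt : T < 1 := lt_of_le_of_ne hT1 hne
    have hcw : ContinuousWithinAt u (Icc 0 1) T := (hu T hTmem).continuousWithinAt
    have hmem : u ⁻¹' Ioi 0 ∈ 𝓝[Icc (0:ℝ) 1] T := hcw (Ioi_mem_nhds huT)
    rw [mem_nhdsWithin] at hmem
    obtain ⟨U, hUo, hTU, hUsub⟩ := hmem
    obtain ⟨ε, hε, hball⟩ := Metric.isOpen_iff.1 hUo T hTU
    set T' := min 1 (T + ε / 2) with hT'
    have hTT' : T < T' := lt_min hTlt (by linarith)
    have hT'mem : T' ∈ Icc (0:ℝ) 1 := ⟨le_trans hT0 hTT'.le, min_le_left _ _⟩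
    have hT'S : T' ∈ S := by
      refine ⟨hT'mem, fun z hz => ?_⟩
      rcases le_or_gt z T with h' | h'
      · exact hTS.2 z ⟨hz.1, h'⟩
      · have hz1 : z ∈ Icc (0:ℝ) 1 := ⟨hz.1, le_trans hz.2 hT'mem.2⟩
        have hzb : z ∈ Metric.ball T ε := by
          rw [Metric.mem_ball, Real.dist_eq, abs_of_pos (by linarith)]
          have : z ≤ T + ε / 2 := le_trans hz.2 (min_le_right _ _)
          linarith
        exact hUsub ⟨hball hzb, hz1⟩
    have := le_csSup hbdd hT'S
    rw [← hTdef] at this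
    linarith
  have hge1 : ∀ z ∈ Icc (0:ℝ) 1, 0 ≤ u z := by
    intro z hz
    rcases eq_or_lt_of_le hz.2 with h' | h'
    · rw [h', ← hTeq]; exact huT.le
    · exact (hlt z hz.1 (hTeq ▸ h')).le
  exact key 1 ⟨zero_le_one, le_rfl⟩ hge1

set_option maxHeartbeats 2000000

theorem BVP_limit_h_to_zero
    (κ κL L cstar : ℝ) (hκ : 0 < κ) (hκL : 0 < κL) (hL : 0 < L) (hc : 0 < cstar)
    (r : ℝ → ℝ) (hr : ContDiff ℝ 1 r) (hrsign : ∀ s : ℝ, s ≠ 0 → s * r s > 0)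
    (hr' : ∀ s : ℝ, 0 ≤ deriv r s) :
    ∀ ε > (0:ℝ), ∃ δ > (0:ℝ), ∀ h : ℝ, 0 < h → h < δ →
      ∀ u u' u'' : ℝ → ℝ, SolvesBVP κ κL L cstar r h u u' u'' →
        ∀ y ∈ Icc (0:ℝ) 1, |u y - cstar| + |u' y| + |u'' y| < ε := by
  intro ε hε
  -- basic facts about r
  have hrpos : ∀ s : ℝ, 0 < s → 0 < r s := by
    intro s hs
    by_contra hcon
    push_neg at hcon
    have := hrsign s hs.ne'
    nlinarith
  have hrneg : ∀ s : ℝ, s < 0 → r s < 0 := by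
    intro s hs
    by_contra hcon
    push_neg at hcon
    have := hrsign s hs.ne
    nlinarith
  have hrc : Continuous r := hr.continuous
  have hr0 : r 0 = 0 := by
    have h1 : 0 ≤ r 0 := by
      refine ge_of_tendsto ((hrc.tendsto 0).mono_left (nhdsWithin_le_nhds (s := Ioi (0:ℝ)))) ?_
      filter_upwards [self_mem_nhdsWithin] with s hs
      exact (hrpos s hs).le
    have h2 : r 0 ≤ 0 := by
      refine le_of_tendsto ((hrc.tendsto 0).mono_left (nhdsWithin_le_nhds (s := Iio (0:ℝ)))) ?_
      filter_upwards [self_mem_nhdsWithin] with s hs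
      exact (hrneg s hs).le
    linarith
  have hrm : Monotone r := monotone_of_deriv_nonneg (hr.differentiable one_ne_zero) hr'
  set M : ℝ := r cstar with hMdef
  have hM : 0 < M := hrpos cstar hc
  set C : ℝ := L / κL * M + 3 * M / κ with hCdef
  have hC : 0 < C := by positivity
  clear_value M C
  refine ⟨min 1 (ε / C), lt_min one_pos (by positivity), ?_⟩
  intro h hh0 hhδ u u' u'' hsolve y hy
  obtain ⟨hu, hu', hu''c, heq0, hb0, hb1⟩ := hsolve
  have hh1 : h < 1 := lt_of_lt_of_le hhδ (min_le_left _ _)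
  have hhε : h < ε / C := lt_of_lt_of_le hhδ (min_le_right _ _)
  set c : ℝ := h ^ 2 / κ with hcdef
  have hcpos : 0 < c := by positivity
  clear_value c
  have heq : ∀ z ∈ Icc (0:ℝ) 1, u'' z = c * r (u z) := by
    intro z hz
    have := heq0 z hz
    field_simp [hcdef]
    rw [← this]
    field_simp
    rw [hcdef, mul_assoc, div_mul_cancel₀ _ hκ.ne']
  have hcoef : 0 < L * κ / (κL * h) := by positivity
  -- u 0 > 0
  have h00 : 0 < u 0 := by
    rcases lt_trichotomy (u 0) 0 with hneg | hzero | hpos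
    · -- mirror case: -u satisfies the invariant, contradiction with boundary condition
      exfalso
      have hinv := BVPaux_pos_invariant hcpos (r := fun s => -r (-s)) (by simp [hr0])
        (fun s hs => by simpa using hrneg (-s) (by linarith))
        (u := fun z => -u z) (u' := fun z => -u' z) (u'' := fun z => -u'' z)
        (fun z hz => (hu z hz).neg) (fun z hz => (hu' z hz).neg)
        (fun z hz => by simp [heq z hz]) (by simpa using hneg) (by simp [hb0])
      have h1 : -u 0 ≤ -u 1 := (hinv 1 ⟨zero_le_one, le_rfl⟩).1
      have h2 : (0:ℝ) ≤ -u' 1 := (hinv 1 ⟨zero_le_one, le_rfl⟩).2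
      have hu'1 : u' 1 ≤ 0 := by linarith
      have hprod : L * κ / (κL * h) * u' 1 ≤ 0 :=
        mul_nonpos_of_nonneg_of_nonpos hcoef.le hu'1
      linarith
    · -- u 0 = 0 : Gronwall implies u ≡ 0, contradiction
      exfalso
      have hcont : ContinuousOn u (Icc (0:ℝ) 1) := BVPaux_cont hu
      obtain ⟨B, hB⟩ := isCompact_Icc.exists_bound_of_continuousOn hcont
      have hB0 : 0 ≤ B := le_trans (norm_nonneg _) (hB 0 ⟨le_rfl, zero_le_one⟩)
      obtain ⟨K, hK⟩ := isCompact_Icc.exists_bound_of_continuousOn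
        ((hr.continuous_deriv le_rfl).continuousOn (s := Icc (-B) B))
      have h0B : (0:ℝ) ∈ Icc (-B) B := ⟨by linarith, hB0⟩
      have hK0 : 0 ≤ K := le_trans (norm_nonneg _) (hK 0 h0B)
      have hlip : ∀ z ∈ Icc (0:ℝ) 1, |r (u z)| ≤ K * |u z| := by
        intro z hz
        have huB : u z ∈ Icc (-B) B := by
          have := hB z hz
          rw [Real.norm_eq_abs, abs_le] at this
          exact this
        have := Convex.norm_image_sub_le_of_norm_hasDerivWithin_le
          (f := r) (f' := deriv r) (s := Icc (-B) B)
          (fun x hx => ((hr.differentiable one_ne_zero).differentiableAt).hasDerivAt.hasDerivWithinAt)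
          hK (convex_Icc _ _) h0B huB
        simpa [hr0, hzero, Real.norm_eq_abs] using this
      set K' : ℝ := 1 + c * K with hK'def
      set f : ℝ → ℝ × ℝ := fun z => (u z, u' z) with hfdef
      have hfc : ContinuousOn f (Icc (0:ℝ) 1) :=
        (BVPaux_cont hu).prodMk (BVPaux_cont hu')
      have hfd : ∀ x ∈ Ico (0:ℝ) 1, HasDerivWithinAt f (u' x, u'' x) (Ici x) x := by
        intro x hx
        have : HasDerivWithinAt f (u' x, u'' x) (Icc (0:ℝ) 1) x :=
          (hu x (Ico_subset_Icc_self hx)).prodMk (hu' x (Ico_subset_Icc_self hx))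
        exact this.mono_of_mem_nhdsWithin (Icc_mem_nhdsGE_of_mem ⟨hx.1, hx.2⟩)
      have hbound : ∀ x ∈ Ico (0:ℝ) 1, ‖(u' x, u'' x)‖ ≤ K' * ‖f x‖ + 0 := by
        intro x hx
        have hx1 : x ∈ Icc (0:ℝ) 1 := Ico_subset_Icc_self hx
        rw [add_zero, Prod.norm_def]
        have hn1 : ‖u' x‖ ≤ ‖f x‖ := le_max_right _ _
        have hn0 : ‖u x‖ ≤ ‖f x‖ := le_max_left _ _
        have h'' : ‖u'' x‖ ≤ c * K * ‖u x‖ := by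
          rw [heq x hx1, Real.norm_eq_abs, Real.norm_eq_abs, abs_mul,
            abs_of_pos hcpos]
          calc c * |r (u x)| ≤ c * (K * |u x|) :=
                mul_le_mul_of_nonneg_left (hlip x hx1) hcpos.le
            _ = c * K * |u x| := by ring
        have hf0 : 0 ≤ ‖f x‖ := norm_nonneg _
        have hcK : 0 ≤ c * K := mul_nonneg hcpos.le hK0
        show max ‖u' x‖ ‖u'' x‖ ≤ K' * ‖f x‖
        apply max_le
        · nlinarith [mul_nonneg hcK hf0]
        · calc ‖u'' x‖ ≤ c * K * ‖u x‖ := h''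
            _ ≤ K' * ‖f x‖ := by nlinarith [mul_le_mul_of_nonneg_left hn0 hcK]
      have hf00 : ‖f 0‖ ≤ 0 := by
        simp [hfdef, hzero, hb0, Prod.norm_def]
      have := norm_le_gronwallBound_of_norm_deriv_right_le hfc hfd hf00 hbound
      have h1 := this 1 ⟨zero_le_one, le_rfl⟩
      rw [gronwallBound_ε0_δ0] at h1
      have hfz : f 1 = 0 := by
        have := norm_nonneg (f 1)
        have : ‖f 1‖ = 0 := le_antisymm h1 this
        exact norm_eq_zero.1 this
      have hu1 : u 1 = 0 := congrArg Prod.fst hfz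
      have hu'1 : u' 1 = 0 := congrArg Prod.snd hfz
      rw [hu1, hu'1] at hb1
      simp at hb1
      linarith
    · exact hpos
  -- the invariant
  have hinv := BVPaux_pos_invariant hcpos hr0 hrpos hu hu' heq h00 hb0
  have hu'nn : ∀ z ∈ Icc (0:ℝ) 1, 0 ≤ u' z := fun z hz => (hinv z hz).2
  have hu'1 : 0 ≤ u' 1 := hu'nn 1 ⟨zero_le_one, le_rfl⟩
  have hub1 : u 1 ≤ cstar := by nlinarith
  have humono : MonotoneOn u (Icc (0:ℝ) 1) := BVPaux_mono hu hu'nn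
  have hub : ∀ z ∈ Icc (0:ℝ) 1, u z ≤ cstar := fun z hz =>
    le_trans (humono hz ⟨zero_le_one, le_rfl⟩ hz.2) hub1
  have hulb : ∀ z ∈ Icc (0:ℝ) 1, u 0 ≤ u z := fun z hz => (hinv z hz).1
  have h''b : ∀ z ∈ Icc (0:ℝ) 1, 0 ≤ u'' z ∧ u'' z ≤ c * M := by
    intro z hz
    rw [heq z hz]
    constructor
    · exact le_of_lt (mul_pos hcpos (hrpos _ (lt_of_lt_of_le h00 (hulb z hz))))
    · exact mul_le_mul_of_nonneg_left (le_trans (hrm (hub z hz)) hMdef.ge) hcpos.le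
  have hu'mono : MonotoneOn u' (Icc (0:ℝ) 1) := BVPaux_mono hu' fun z hz => (h''b z hz).1
  -- MVT for u' : u' 1 ≤ c * M
  have hmvt1 : u' 1 ≤ c * M := by
    obtain ⟨ξ, hξ, hξeq⟩ := exists_hasDerivAt_eq_slope u' u'' one_pos (BVPaux_cont hu')
      (fun x hx => (hu' x (Ioo_subset_Icc_self hx)).hasDerivAt (Icc_mem_nhds hx.1 hx.2))
    rw [hb0, sub_zero, sub_zero, div_one] at hξeq
    rw [← hξeq]
    exact (h''b ξ (Ioo_subset_Icc_self hξ)).2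
  have hu'b : ∀ z ∈ Icc (0:ℝ) 1, u' z ≤ c * M := fun z hz =>
    le_trans (hu'mono hz ⟨zero_le_one, le_rfl⟩ hz.2) hmvt1
  -- MVT for u : u 1 - u 0 ≤ c * M
  have hmvt2 : u 1 - u 0 ≤ c * M := by
    obtain ⟨η, hη, hηeq⟩ := exists_hasDerivAt_eq_slope u u' one_pos (BVPaux_cont hu)
      (fun x hx => (hu x (Ioo_subset_Icc_self hx)).hasDerivAt (Icc_mem_nhds hx.1 hx.2))
    rw [sub_zero, div_one] at hηeq
    rw [← hηeq]
    exact hu'b η (Ioo_subset_Icc_self hη)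
  -- boundary estimate : cstar - u 1 ≤ L / κL * h * M
  have hbe : cstar - u 1 ≤ L / κL * h * M := by
    have h1 : cstar - u 1 = L * κ / (κL * h) * u' 1 := by linarith
    have h2 : L * κ / (κL * h) * u' 1 ≤ L * κ / (κL * h) * (c * M) :=
      mul_le_mul_of_nonneg_left hmvt1 hcoef.le
    have h3 : L * κ / (κL * h) * (c * M) = L / κL * h * M := by
      rw [hcdef]; field_simp
    linarith
  -- putting everything together
  have hys := hy
  have e1 : |u y - cstar| ≤ L / κL * h * M + c * M := by
    rw [abs_of_nonpos (by linarith [hub y hy])]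
    have := hulb y hy
    linarith
  have e2 : |u' y| ≤ c * M := by
    rw [abs_of_nonneg (hu'nn y hy)]; exact hu'b y hy
  have e3 : |u'' y| ≤ c * M := by
    rw [abs_of_nonneg (h''b y hy).1]; exact (h''b y hy).2
  have hfinal : L / κL * h * M + 3 * (c * M) ≤ h * C := by
    have hcm : c * M = M / κ * h ^ 2 := by rw [hcdef]; ring
    have hh2 : h ^ 2 ≤ h := by nlinarith
    have hMκ : (0:ℝ) ≤ M / κ := by positivity
    rw [hcm, hCdef]
    have hint : M / κ * h ^ 2 ≤ M / κ * h := mul_le_mul_of_nonneg_left hh2 hMκ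
    ring_nf at hint ⊢
    linarith
  have hhC : h * C < ε := by
    calc h * C < ε / C * C := by exact mul_lt_mul_of_pos_right hhε hC
      _ = ε := by field_simp
  linarith
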